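/- For a memoryless (i.i.d.) source-side-information pair (X,Y) with finite alphabets, the conditional varentropy rate equals Var(-log₂ P(X_1|Y_1)), and this quantity is zero if and only if for every y ∈ 𝒴 with ℙ(Y_1 = y) > 0, the conditional distribution of X_1 given Y_1 = y is uniform on a subset 𝒳_y ⊆ 𝒳, where all subsets 𝒳_y have the same cardinality. -/

import Mathlib

open MeasureTheory ProbabilityTheory Filter Classical
open scoped Classical

namespace Stmt15Aux

variable {Ω : Type*} [MeasurableSpace Ω] {μ : Measure Ω}

lemma evariance_congr {f g : Ω → ℝ} (h : f =ᵐ[μ] g) :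
    evariance f μ = evariance g μ := by
  rw [evariance, evariance, integral_congr_ae h]
  refine lintegral_congr_ae ?_
  filter_upwards [h] with ω hω
  rw [hω]

lemma variance_congr {f g : Ω → ℝ} (h : f =ᵐ[μ] g) :
    variance f μ = variance g μ := by
  rw [variance, variance, evariance_congr h]

lemma variance_const' [IsProbabilityMeasure μ] (c : ℝ) :
    variance (fun _ : Ω => c) μ = 0 := by
  rw [variance, evariance]
  have h : (μ[fun _ : Ω => c]) = c := by simp
  simp [h]

lemma evariance_comp {α : Type*} [MeasurableSpace α] {f : Ω → α} {g : α → ℝ}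
    (hf : Measurable f) (hg : Measurable g) :
    evariance (g ∘ f) μ = evariance g (μ.map f) := by
  rw [evariance, evariance, integral_map hf.aemeasurable hg.aestronglyMeasurable,
    lintegral_map (show Measurable fun a => ‖g a - ∫ x, g (f x) ∂μ‖ₑ ^ (2:ℕ) from by fun_prop) hf]
  rfl

lemma logb_prod {α : Type*} (s : Finset α) (f : α → ℝ) (b : ℝ)
    (hf : ∀ x ∈ s, f x ≠ 0) :
    Real.logb b (∏ x ∈ s, f x) = ∑ x ∈ s, Real.logb b (f x) := by
  simp only [Real.logb, Real.log_prod hf, Finset.sum_div]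

end Stmt15Aux

/-- For a memoryless (i.i.d.) source-side-information pair on finite
alphabets, the conditional varentropy rate `lim (1/n) Var(-log₂ P(X₁ⁿ|Y₁ⁿ))`
equals `Var(-log₂ P(X₁|Y₁))`, and it is zero iff for every `y` with positive
probability the conditional distribution of `X₁` given `Y₁ = y` is uniform on a
subset `𝒳_y ⊆ 𝒳`, with all the subsets `𝒳_y` of the same cardinality. -/
theorem stmt15 {Ω 𝒳 𝒴 : Type*} [MeasurableSpace Ω]
    [Fintype 𝒳] [Fintype 𝒴] [MeasurableSpace 𝒳] [MeasurableSingletonClass 𝒳]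
    [MeasurableSpace 𝒴] [MeasurableSingletonClass 𝒴]
    (μ : Measure Ω) [IsProbabilityMeasure μ]
    (X : ℕ → Ω → 𝒳) (Y : ℕ → Ω → 𝒴)
    (hX : ∀ i, Measurable (X i)) (hY : ∀ i, Measurable (Y i))
    -- the pairs (Xᵢ, Yᵢ) are i.i.d.:
    (hindep : iIndepFun (fun i ω => (X i ω, Y i ω)) μ)
    (hident : ∀ i, Measure.map (fun ω => (X i ω, Y i ω)) μ =
      Measure.map (fun ω => (X 0 ω, Y 0 ω)) μ)
    -- the conditional information density -log₂ P(X₁ⁿ|Y₁ⁿ):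
    (ι : ℕ → Ω → ℝ)
    (hι : ∀ n ω, ι n ω = -Real.logb 2
      ((μ {ω' | ∀ i : Fin n, X i ω' = X i ω ∧ Y i ω' = Y i ω}).toReal /
        (μ {ω' | ∀ i : Fin n, Y i ω' = Y i ω}).toReal)) :
    Tendsto (fun n : ℕ => variance (ι n) μ / n) atTop (nhds (variance (ι 1) μ)) ∧
    (variance (ι 1) μ = 0 ↔ ∃ m : ℕ, 0 < m ∧
      ∀ y : 𝒴, 0 < (μ {ω | Y 0 ω = y}).toReal →
        ∃ s : Finset 𝒳, s.card = m ∧ ∀ x : 𝒳,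
          (μ {ω | X 0 ω = x ∧ Y 0 ω = y}).toReal / (μ {ω | Y 0 ω = y}).toReal =
            if x ∈ s then 1 / (m : ℝ) else 0) := by
  classical
  set Z : ℕ → Ω → 𝒳 × 𝒴 := fun i ω => (X i ω, Y i ω) with hZdef
  have hZ : ∀ i, Measurable (Z i) := fun i => (hX i).prodMk (hY i)
  set ν : Measure (𝒳 × 𝒴) := μ.map (Z 0) with hνdef
  have hνp : IsProbabilityMeasure ν := Measure.isProbabilityMeasure_map (hZ 0).aemeasurable
  have hms : ∀ s : Set (𝒳 × 𝒴), MeasurableSet s := fun s => s.to_countable.measurableSet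
  have hmap : ∀ i (s : Set (𝒳 × 𝒴)), μ (Z i ⁻¹' s) = ν s := by
    intro i s
    have h : μ.map (Z i) = ν := hident i
    rw [← h, Measure.map_apply (hZ i) (hms s)]
  set p : 𝒳 × 𝒴 → ℝ := fun z => (ν {z}).toReal with hpdef
  set q : 𝒴 → ℝ := fun y => (ν (Set.univ ×ˢ {y})).toReal with hqdef
  set g : 𝒳 × 𝒴 → ℝ := fun z => -Real.logb 2 (p z / q z.2) with hgdef
  have hgm : Measurable g := measurable_of_countable g
  -- positivity facts
  have hppos : ∀ z : 𝒳 × 𝒴, ν {z} ≠ 0 → 0 < p z := fun z hz =>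
    ENNReal.toReal_pos hz (measure_ne_top _ _)
  have hple : ∀ z : 𝒳 × 𝒴, p z ≤ q z.2 := by
    intro z
    refine ENNReal.toReal_mono (measure_ne_top _ _) (measure_mono ?_)
    intro w hw
    rcases hw with rfl
    exact ⟨Set.mem_univ _, rfl⟩
  have hqpos : ∀ z : 𝒳 × 𝒴, ν {z} ≠ 0 → 0 < q z.2 := fun z hz =>
    lt_of_lt_of_le (hppos z hz) (hple z)
  -- a.s. the pair lands in the support
  have hsupp : ∀ i, ∀ᵐ ω ∂μ, ν {Z i ω} ≠ 0 := by
    intro i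
    have h0 : ν {z : 𝒳 × 𝒴 | ν {z} = 0} = 0 := by
      have he : {z : 𝒳 × 𝒴 | ν {z} = 0} = ⋃ z ∈ {z : 𝒳 × 𝒴 | ν {z} = 0}, {z} :=
        (Set.biUnion_of_singleton _).symm
      rw [he, measure_biUnion_null_iff (Set.to_countable _)]
      exact fun z hz => hz
    have h1 : μ (Z i ⁻¹' {z : 𝒳 × 𝒴 | ν {z} = 0}) = 0 := by rw [hmap i, h0]
    have h2 := measure_eq_zero_iff_ae_notMem.mp h1
    filter_upwards [h2] with ω hω
    simpa using hω
  -- numerator as a product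
  have hnum : ∀ (n : ℕ) ω, (μ {ω' | ∀ i : Fin n, X i ω' = X i ω ∧ Y i ω' = Y i ω}).toReal
      = ∏ i ∈ Finset.range n, p (Z i ω) := by
    intro n ω
    have hset : {ω' | ∀ i : Fin n, X i ω' = X i ω ∧ Y i ω' = Y i ω}
        = ⋂ i ∈ Finset.range n, Z i ⁻¹' {Z i ω} := by
      ext ω'
      simp only [Set.mem_setOf_eq, Set.mem_iInter, Set.mem_preimage, Set.mem_singleton_iff,
        Finset.mem_range, hZdef, Prod.ext_iff]
      constructor
      · intro h i hi; exact h ⟨i, hi⟩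
      · intro h i; exact h i i.isLt
    rw [hset, hindep.measure_inter_preimage_eq_mul (Finset.range n)
        (fun i _ => measurableSet_singleton _), ENNReal.toReal_prod]
    refine Finset.prod_congr rfl fun i _ => ?_
    rw [hpdef]
    rw [hmap i]
  -- denominator as a product
  have hden : ∀ (n : ℕ) ω, (μ {ω' | ∀ i : Fin n, Y i ω' = Y i ω}).toReal
      = ∏ i ∈ Finset.range n, q (Y i ω) := by
    intro n ω
    have hset : {ω' | ∀ i : Fin n, Y i ω' = Y i ω}
        = ⋂ i ∈ Finset.range n, Z i ⁻¹' (Set.univ ×ˢ {Y i ω}) := by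
      ext ω'
      simp only [Set.mem_setOf_eq, Set.mem_iInter, Set.mem_preimage, hZdef,
        Set.mem_prod, Set.mem_univ, true_and, Set.mem_singleton_iff, Finset.mem_range]
      constructor
      · intro h i hi; exact h ⟨i, hi⟩
      · intro h i; exact h i i.isLt
    rw [hset, hindep.measure_inter_preimage_eq_mul (Finset.range n)
        (fun i _ => hms _), ENNReal.toReal_prod]
    refine Finset.prod_congr rfl fun i _ => ?_
    rw [hqdef]
    rw [hmap i]
  -- ι 1 equals g ∘ Z 0
  have hι1 : ι 1 = g ∘ Z 0 := by
    funext ω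
    rw [hι 1 ω, hnum 1 ω, hden 1 ω, Finset.prod_range_one, Finset.prod_range_one]
    rfl
  -- Memℒp
  have hbound : ∀ z : 𝒳 × 𝒴, ‖g z‖ ≤ ∑ w : 𝒳 × 𝒴, ‖g w‖ := fun z =>
    Finset.single_le_sum (fun _ _ => norm_nonneg _) (Finset.mem_univ z)
  have hmem : ∀ i, MemLp (g ∘ Z i) 2 μ := fun i =>
    MemLp.of_bound (hgm.comp (hZ i)).aestronglyMeasurable _ (ae_of_all _ fun ω => hbound _)
  -- identical variances
  have hvar_i : ∀ i, variance (g ∘ Z i) μ = variance (g ∘ Z 0) μ := by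
    intro i
    rw [variance, variance, Stmt15Aux.evariance_comp (hZ i) hgm,
      Stmt15Aux.evariance_comp (hZ 0) hgm]
    have h : μ.map (Z i) = μ.map (Z 0) := hident i
    rw [h]
  -- ι n is a.e. the sum of the g ∘ Z i
  have hsum : ∀ n : ℕ, ι n =ᵐ[μ] fun ω => ∑ i ∈ Finset.range n, g (Z i ω) := by
    intro n
    have hall : ∀ᵐ ω ∂μ, ∀ i ∈ Finset.range n, ν {Z i ω} ≠ 0 :=
      (Filter.eventually_all_finset _).mpr fun i _ => hsupp i
    filter_upwards [hall] with ω hω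
    have h1 : ∀ i ∈ Finset.range n, p (Z i ω) / q (Y i ω) ≠ 0 := fun i hi =>
      div_ne_zero (hppos _ (hω i hi)).ne' (hqpos _ (hω i hi)).ne'
    rw [hι n ω, hnum n ω, hden n ω, ← Finset.prod_div_distrib,
      Stmt15Aux.logb_prod _ _ _ h1, ← Finset.sum_neg_distrib]
  -- variance scaling
  have hvar_n : ∀ n : ℕ, variance (ι n) μ = n * variance (ι 1) μ := by
    intro n
    rw [Stmt15Aux.variance_congr (hsum n)]
    have hfun : (fun ω => ∑ i ∈ Finset.range n, g (Z i ω))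
        = ∑ i ∈ Finset.range n, (g ∘ Z i) := by
      funext ω; simp [Finset.sum_apply]
    rw [hfun, IndepFun.variance_sum (fun i _ => hmem i)
      (fun i _ j _ hij => (hindep.indepFun hij).comp hgm hgm), hι1]
    calc ∑ i ∈ Finset.range n, variance (g ∘ Z i) μ
        = ∑ _i ∈ Finset.range n, variance (g ∘ Z 0) μ :=
          Finset.sum_congr rfl fun i _ => hvar_i i
      _ = n * variance (g ∘ Z 0) μ := by
          rw [Finset.sum_const, Finset.card_range, nsmul_eq_mul]
  constructor
  · -- the limit statement
    have hev : (fun n : ℕ => variance (ι n) μ / n) =ᶠ[atTop]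
        fun _ => variance (ι 1) μ := by
      filter_upwards [eventually_ge_atTop 1] with n hn
      have hne : (n : ℝ) ≠ 0 := Nat.cast_ne_zero.mpr (by omega)
      rw [hvar_n n, mul_comm, mul_div_assoc, div_self hne, mul_one]
    exact (tendsto_congr' hev).mpr tendsto_const_nhds
  · -- the characterization of zero variance
    -- translate the measures in the statement
    have hq' : ∀ y : 𝒴, (μ {ω | Y 0 ω = y}).toReal = q y := by
      intro y
      have hs : {ω | Y 0 ω = y} = Z 0 ⁻¹' (Set.univ ×ˢ {y}) := by
        ext ω
        simp [hZdef, eq_comm]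
      rw [hs, hmap 0, hqdef]
    have hp' : ∀ (x : 𝒳) (y : 𝒴), (μ {ω | X 0 ω = x ∧ Y 0 ω = y}).toReal = p (x, y) := by
      intro x y
      have hs : {ω | X 0 ω = x ∧ Y 0 ω = y} = Z 0 ⁻¹' {(x, y)} := by
        ext ω
        simp [hZdef, Prod.ext_iff]
      rw [hs, hmap 0, hpdef]
    -- q y is the sum of the p (x, y)
    have hqsum : ∀ y : 𝒴, q y = ∑ x : 𝒳, p (x, y) := by
      intro y
      have hU : (Set.univ ×ˢ ({y} : Set 𝒴)) = ⋃ x : 𝒳, {(x, y)} := by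
        ext z
        simp only [Set.mem_prod, Set.mem_univ, true_and, Set.mem_singleton_iff, Set.mem_iUnion]
        constructor
        · intro h; exact ⟨z.1, by rw [← h]⟩
        · rintro ⟨x, rfl⟩; rfl
      have hdisj : Pairwise (Function.onFun Disjoint fun x : 𝒳 => ({(x, y)} : Set (𝒳 × 𝒴))) := by
        intro a b hab
        simp only [Function.onFun, Set.disjoint_singleton]
        exact fun h => hab (congrArg Prod.fst h)
      show (ν (Set.univ ×ˢ {y})).toReal = ∑ x : 𝒳, (ν {(x, y)}).toReal
      rw [hU, measure_iUnion hdisj fun _ => hms _, tsum_fintype,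
        ENNReal.toReal_sum (fun _ _ => measure_ne_top _ _)]
    -- variance zero iff a.e. constant
    have hvar0iff : variance (ι 1) μ = 0 ↔ (g ∘ Z 0) =ᵐ[μ] fun _ => μ[g ∘ Z 0] := by
      rw [hι1, variance, ENNReal.toReal_eq_zero_iff]
      have htop : evariance (g ∘ Z 0) μ ≠ ⊤ := (hmem 0).evariance_lt_top.ne
      constructor
      · rintro (h | h)
        · exact (evariance_eq_zero_iff (hgm.comp (hZ 0)).aemeasurable).mp h
        · exact absurd h htop
      · intro h
        exact Or.inl ((evariance_eq_zero_iff (hgm.comp (hZ 0)).aemeasurable).mpr h)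
    rw [hvar0iff]
    set c := μ[g ∘ Z 0] with hcdef
    constructor
    · -- forward direction
      intro hae
      have hgc : ∀ z : 𝒳 × 𝒴, ν {z} ≠ 0 → g z = c := by
        intro z hz
        by_contra hne
        have hsub : Z 0 ⁻¹' {z} ⊆ {ω | ¬ (g ∘ Z 0) ω = (fun _ : Ω => c) ω} := by
          intro ω hω
          simp only [Set.mem_preimage, Set.mem_singleton_iff] at hω
          simp only [Set.mem_setOf_eq, Function.comp_apply, hω]
          exact hne
        have h0 : μ (Z 0 ⁻¹' {z}) = 0 := measure_mono_null hsub (ae_iff.mp hae)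
        rw [hmap 0] at h0
        exact hz h0
      have hratio : ∀ z : 𝒳 × 𝒴, ν {z} ≠ 0 → p z / q z.2 = (2:ℝ) ^ (-c) := by
        intro z hz
        have h1 : Real.logb 2 (p z / q z.2) = -c := by
          have h2 := hgc z hz
          rw [hgdef] at h2
          linarith [h2]
        rw [← h1]
        exact (Real.rpow_logb (by norm_num) (by norm_num)
          (div_pos (hppos z hz) (hqpos z hz))).symm
      set r := (2:ℝ) ^ (-c) with hrdef
      -- for every y with q y > 0, the support cardinality satisfies card * r = 1
      have hcard : ∀ y : 𝒴, 0 < q y →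
          ((Finset.univ.filter fun x : 𝒳 => p (x, y) ≠ 0).card : ℝ) * r = 1 := by
        intro y hy
        have hν : ∀ x : 𝒳, p (x, y) ≠ 0 → ν {(x, y)} ≠ 0 := by
          intro x hx h0
          exact hx (by simp [hpdef, h0])
        have hsum1 : q y = ∑ x ∈ Finset.univ.filter fun x : 𝒳 => p (x, y) ≠ 0, p (x, y) := by
          rw [hqsum y]
          exact (Finset.sum_filter_ne_zero _).symm
        have hterm : ∀ x ∈ Finset.univ.filter fun x : 𝒳 => p (x, y) ≠ 0,
            p (x, y) = r * q y := by
          intro x hx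
          have hx' : p (x, y) ≠ 0 := (Finset.mem_filter.mp hx).2
          have h3 := hratio (x, y) (hν x hx')
          rw [div_eq_iff hy.ne'] at h3
          exact h3
        rw [Finset.sum_congr rfl hterm, Finset.sum_const, nsmul_eq_mul] at hsum1
        exact mul_right_cancel₀ hy.ne' (by rw [one_mul, mul_assoc]; exact hsum1.symm)
      -- there is some y with q y > 0
      obtain ⟨ω0, hω0⟩ := (hsupp 0).exists
      have hy0 : 0 < q (Z 0 ω0).2 := hqpos _ hω0
      have hr0 : r ≠ 0 := by
        intro h
        have := hcard _ hy0
        rw [h, mul_zero] at this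
        exact zero_ne_one this
      refine ⟨(Finset.univ.filter fun x : 𝒳 => p (x, (Z 0 ω0).2) ≠ 0).card, ?_, ?_⟩
      · by_contra h
        push_neg at h
        interval_cases h' : (Finset.univ.filter fun x : 𝒳 => p (x, (Z 0 ω0).2) ≠ 0).card
        · have := hcard _ hy0
          rw [h'] at this
          norm_num at this
      · intro y hy
        rw [hq' y] at hy
        refine ⟨Finset.univ.filter fun x : 𝒳 => p (x, y) ≠ 0, ?_, ?_⟩
        · have h1 := hcard y hy
          have h2 := hcard _ hy0
          have : ((Finset.univ.filter fun x : 𝒳 => p (x, y) ≠ 0).card : ℝ)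
              = ((Finset.univ.filter fun x : 𝒳 => p (x, (Z 0 ω0).2) ≠ 0).card : ℝ) := by
            have := mul_right_cancel₀ hr0 (h1.trans h2.symm)
            exact this
          exact_mod_cast this
        · intro x
          rw [hp' x y, hq' y]
          by_cases hx : x ∈ Finset.univ.filter fun x : 𝒳 => p (x, y) ≠ 0
          · rw [if_pos hx]
            have hx' : p (x, y) ≠ 0 := (Finset.mem_filter.mp hx).2
            have hν : ν {(x, y)} ≠ 0 := by
              intro h0
              exact hx' (by simp [hpdef, h0])
            have h1 := hratio (x, y) hν
            rw [h1]
            exact eq_one_div_of_mul_eq_one_right (hcard _ hy0)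
          · rw [if_neg hx]
            have hx' : p (x, y) = 0 := by
              by_contra h
              exact hx (Finset.mem_filter.mpr ⟨Finset.mem_univ x, h⟩)
            rw [hx', zero_div]
    · -- reverse direction
      rintro ⟨m, hm, h⟩
      have hae : (g ∘ Z 0) =ᵐ[μ] fun _ => Real.logb 2 m := by
        filter_upwards [hsupp 0] with ω hω
        have hq0 : 0 < q (Z 0 ω).2 := hqpos _ hω
        obtain ⟨s, hcard, hs⟩ := h (Z 0 ω).2 (by rw [hq']; exact hq0)
        have hx := hs (Z 0 ω).1
        rw [hp', hq'] at hx
        have hpz : 0 < p (Z 0 ω) := hppos _ hω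
        by_cases hxs : (Z 0 ω).1 ∈ s
        · rw [if_pos hxs] at hx
          show g (Z 0 ω) = Real.logb 2 m
          have h4 : p (Z 0 ω) / q (Z 0 ω).2 = 1 / (m : ℝ) := hx
          simp only [hgdef]
          rw [h4, one_div, Real.logb_inv, neg_neg]
        · rw [if_neg hxs] at hx
          exact absurd hx (by positivity)
      have hc : c = Real.logb 2 m := by
        rw [hcdef, integral_congr_ae hae]
        simp
      rw [hc]
      exact hae
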